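/- arXiv:2204.10054 — 2 statements merged into one kernel-verified Lean document; each statement's English description precedes it below -/
import Mathlib

section
/- Let m > 1, 1 ≤ p < m, N ≥ 3. If f is a C² solution of the profile ODE (f^m)'' + ((N-1)/ξ)(f^m)' + (1/2)ξ f' + ξ^{-2} f^p = 0 on an interval where f > 0, and f is strictly decreasing on some initial interval (0,δ), then f is strictly decreasing on its entire positivity set. -/
open Real Set Filter

/-- If `h` has negative derivative at `c`, there are points just to the left of `c`
where `h` is larger than `h c`. -/
lemma exists_left_gt {h : ℝ → ℝ} {c d : ℝ} (hD : HasDerivAt h d c) (hd : d < 0)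
    {a : ℝ} (ha : a < c) : ∃ ξ ∈ Set.Ioo a c, h c < h ξ := by
  rw [hasDerivAt_iff_tendsto_slope] at hD
  have h1 : ∀ᶠ ξ in nhdsWithin c (Set.Iio c), slope h c ξ < 0 :=
    (hD.mono_left (nhdsWithin_mono c fun x hx => ne_of_lt hx)).eventually_lt_const hd
  have h2 : Set.Ioo a c ∈ nhdsWithin c (Set.Iio c) :=
    Ioo_mem_nhdsLT_of_mem ⟨ha, le_rfl⟩
  obtain ⟨ξ, hs, hmem⟩ := (h1.and (eventually_of_mem h2 fun x hx => hx)).exists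
  refine ⟨ξ, hmem, ?_⟩
  rw [slope_def_field] at hs
  have hne : ξ - c < 0 := sub_neg.mpr hmem.2
  rcases div_neg_iff.mp hs with ⟨h3, h4⟩ | ⟨h3, h4⟩
  · linarith
  · linarith

/-- If `h` has positive derivative at `c`, there are points just to the right of `c`
where `h` is larger than `h c`. -/
lemma exists_right_gt {h : ℝ → ℝ} {c d : ℝ} (hD : HasDerivAt h d c) (hd : 0 < d)
    {b : ℝ} (hb : c < b) : ∃ ξ ∈ Set.Ioo c b, h c < h ξ := by
  rw [hasDerivAt_iff_tendsto_slope] at hD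
  have h1 : ∀ᶠ ξ in nhdsWithin c (Set.Ioi c), 0 < slope h c ξ :=
    (hD.mono_left (nhdsWithin_mono c fun x hx => ne_of_gt hx)).eventually_const_lt hd
  have h2 : Set.Ioo c b ∈ nhdsWithin c (Set.Ioi c) :=
    Ioo_mem_nhdsGT_of_mem ⟨le_rfl, hb⟩
  obtain ⟨ξ, hs, hmem⟩ := (h1.and (eventually_of_mem h2 fun x hx => hx)).exists
  refine ⟨ξ, hmem, ?_⟩
  rw [slope_def_field] at hs
  have hne : 0 < ξ - c := sub_pos.mpr hmem.1
  rcases div_pos_iff.mp hs with ⟨h3, h4⟩ | ⟨h3, h4⟩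
  · linarith
  · linarith

/-- a profile solving the self-similar ODE on its positivity set
(an interval (0,ξ₀)) which is strictly decreasing on some initial interval (0,δ)
is strictly decreasing on its entire positivity set. -/
theorem decreasing_on_positivity_set
    (m p : ℝ) (N : ℕ) (f : ℝ → ℝ) (ξ₀ δ : ℝ)
    (hm : 1 < m) (hp1 : 1 ≤ p) (hpm : p < m) (hN : 3 ≤ N)
    (hf : ContDiff ℝ 2 f) (hfnn : ∀ ξ : ℝ, 0 ≤ f ξ)
    (hδ : 0 < δ) (hδξ₀ : δ ≤ ξ₀)
    (hposset : ∀ ξ : ℝ, 0 < ξ → (0 < f ξ ↔ ξ < ξ₀))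
    (hode : ∀ ξ ∈ Set.Ioo (0:ℝ) ξ₀,
      deriv (deriv (fun s => f s ^ m)) ξ
        + ((N : ℝ) - 1) / ξ * deriv (fun s => f s ^ m) ξ
        + (1 / 2) * ξ * deriv f ξ
        + ξ ^ (-2 : ℝ) * f ξ ^ p = 0)
    (hdec : StrictAntiOn f (Set.Ioo 0 δ)) :
    StrictAntiOn f (Set.Ioo 0 ξ₀) := by
  have hfd : Differentiable ℝ f := hf.differentiable (by norm_num)
  have hfd' : Differentiable ℝ (deriv f) := by
    have h2 : ContDiff ℝ ((1:WithTop ℕ∞) + 1) f := by norm_num; exact hf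
    exact ((contDiff_succ_iff_deriv.mp h2).2.2).differentiable (by norm_num)
  have hc' : Continuous (deriv f) := hf.continuous_deriv (by norm_num)
  have hfpos : ∀ ξ ∈ Set.Ioo (0:ℝ) ξ₀, 0 < f ξ := fun ξ hξ =>
    (hposset ξ hξ.1).mpr hξ.2
  -- derivative formula for g = f^m on the positivity set
  have hgd : ∀ ξ ∈ Set.Ioo (0:ℝ) ξ₀,
      HasDerivAt (fun s => f s ^ m) (m * f ξ ^ (m - 1) * deriv f ξ) ξ := by
    intro ξ hξ
    exact (Real.hasDerivAt_rpow_const (Or.inl (hfpos ξ hξ).ne')).comp ξ (hfd ξ).hasDerivAt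
  have hg'eq : ∀ ξ ∈ Set.Ioo (0:ℝ) ξ₀,
      deriv (fun s => f s ^ m) ξ = m * f ξ ^ (m - 1) * deriv f ξ := fun ξ hξ =>
    (hgd ξ hξ).deriv
  -- key: at an interior critical point of f there are nearby points to the left with f' > 0
  have key : ∀ c ∈ Set.Ioo (0:ℝ) ξ₀, deriv f c = 0 →
      ∀ a, 0 ≤ a → a < c → ∃ ξ ∈ Set.Ioo a c, 0 < deriv f ξ := by
    intro c hc hc0 a ha hac
    have hgc0 : deriv (fun s => f s ^ m) c = 0 := by
      rw [hg'eq c hc, hc0, mul_zero]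
    have hU : Set.Ioo (0:ℝ) ξ₀ ∈ nhds c := isOpen_Ioo.mem_nhds hc
    have heq : deriv (fun s => f s ^ m) =ᶠ[nhds c]
        (fun ξ => m * f ξ ^ (m - 1) * deriv f ξ) :=
      eventually_of_mem hU fun ξ hξ => hg'eq ξ hξ
    have hrhs : DifferentiableAt ℝ (fun ξ => m * f ξ ^ (m - 1) * deriv f ξ) c := by
      have h1 : DifferentiableAt ℝ (fun ξ => f ξ ^ (m - 1)) c :=
        ((Real.hasDerivAt_rpow_const (Or.inl (hfpos c hc).ne')).comp c
          (hfd c).hasDerivAt).differentiableAt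
      exact ((differentiableAt_const m).mul h1).mul (hfd' c)
    have hdg : DifferentiableAt ℝ (deriv (fun s => f s ^ m)) c :=
      heq.differentiableAt_iff.mpr hrhs
    have hD : HasDerivAt (deriv (fun s => f s ^ m))
        (deriv (deriv (fun s => f s ^ m)) c) c := hdg.hasDerivAt
    have hDneg : deriv (deriv (fun s => f s ^ m)) c < 0 := by
      have hodec := hode c hc
      rw [hgc0, hc0] at hodec
      have h1 : (0:ℝ) < c ^ (-2 : ℝ) := Real.rpow_pos_of_pos hc.1 _
      have h2 : (0:ℝ) < f c ^ p := Real.rpow_pos_of_pos (hfpos c hc) _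
      nlinarith
    obtain ⟨ξ, hξmem, hξgt⟩ := exists_left_gt hD hDneg hac
    rw [hgc0] at hξgt
    have hξU : ξ ∈ Set.Ioo (0:ℝ) ξ₀ :=
      ⟨lt_of_le_of_lt ha hξmem.1, lt_trans hξmem.2 hc.2⟩
    rw [hg'eq ξ hξU] at hξgt
    have hmul : (0:ℝ) < m * f ξ ^ (m - 1) := by
      have := hfpos ξ hξU
      positivity
    refine ⟨ξ, hξmem, ?_⟩
    nlinarith
  -- f' < 0 on the initial interval
  have hneg1 : ∀ ξ ∈ Set.Ioo (0:ℝ) δ, deriv f ξ < 0 := by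
    intro ξ₁ hξ₁
    by_contra hle
    push_neg at hle
    have hξ₁U : ξ₁ ∈ Set.Ioo (0:ℝ) ξ₀ := ⟨hξ₁.1, lt_of_lt_of_le hξ₁.2 hδξ₀⟩
    rcases hle.eq_or_lt with heq0 | hpos
    · -- critical point inside (0, δ): get a point with f' > 0 inside (0, δ)
      obtain ⟨ξ, hξmem, hξpos⟩ := key ξ₁ hξ₁U heq0.symm 0 le_rfl hξ₁.1
      obtain ⟨ξ', hξ'mem, hξ'gt⟩ :=
        exists_right_gt (hfd ξ).hasDerivAt hξpos hξmem.2
      have h1 : ξ ∈ Set.Ioo (0:ℝ) δ := ⟨hξmem.1, lt_trans hξmem.2 hξ₁.2⟩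
      have h2 : ξ' ∈ Set.Ioo (0:ℝ) δ :=
        ⟨lt_trans hξmem.1 hξ'mem.1, lt_trans hξ'mem.2 hξ₁.2⟩
      have := hdec h1 h2 hξ'mem.1
      linarith
    · obtain ⟨ξ', hξ'mem, hξ'gt⟩ :=
        exists_right_gt (hfd ξ₁).hasDerivAt hpos hξ₁.2
      have h2 : ξ' ∈ Set.Ioo (0:ℝ) δ := ⟨lt_trans hξ₁.1 hξ'mem.1, hξ'mem.2⟩
      have := hdec hξ₁ h2 hξ'mem.1
      linarith
  -- f' < 0 on all of (0, ξ₀)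
  have hneg : ∀ ξ ∈ Set.Ioo (0:ℝ) ξ₀, deriv f ξ < 0 := by
    intro x hx
    by_contra hle
    push_neg at hle
    set S : Set ℝ := {ξ | ξ ∈ Set.Ioo (0:ℝ) ξ₀ ∧ 0 ≤ deriv f ξ} with hS
    have hxS : x ∈ S := ⟨hx, hle⟩
    have hSne : S.Nonempty := ⟨x, hxS⟩
    have hbdd : BddBelow S := ⟨0, fun y hy => le_of_lt hy.1.1⟩
    set c := sInf S with hcdef
    have hδc : δ ≤ c := by
      apply le_csInf hSne
      intro y hy
      by_contra hlt
      push_neg at hlt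
      exact absurd hy.2 (not_le.mpr (hneg1 y ⟨hy.1.1, hlt⟩))
    have hcx : c ≤ x := csInf_le hbdd hxS
    have hcpos : 0 < c := lt_of_lt_of_le hδ hδc
    have hcU : c ∈ Set.Ioo (0:ℝ) ξ₀ := ⟨hcpos, lt_of_le_of_lt hcx hx.2⟩
    have hlt : ∀ ξ ∈ Set.Ioo (0:ℝ) c, deriv f ξ < 0 := by
      intro ξ hξ
      have hξU : ξ ∈ Set.Ioo (0:ℝ) ξ₀ := ⟨hξ.1, lt_trans hξ.2 hcU.2⟩
      by_contra hle2
      push_neg at hle2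
      exact absurd (csInf_le hbdd (⟨hξU, hle2⟩ : ξ ∈ S)) (not_le.mpr hξ.2)
    have hge0 : 0 ≤ deriv f c := by
      have hclosed : IsClosed {y : ℝ | 0 ≤ deriv f y} :=
        isClosed_le continuous_const hc'
      have hmemcl : c ∈ closure S := (isGLB_csInf hSne hbdd).mem_closure hSne
      have hsub : closure S ⊆ {y : ℝ | 0 ≤ deriv f y} :=
        closure_minimal (fun y hy => hy.2) hclosed
      exact hsub hmemcl
    have hle0 : deriv f c ≤ 0 := by
      have htend : Tendsto (deriv f) (nhdsWithin c (Set.Iio c)) (nhds (deriv f c)) :=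
        (hc'.tendsto c).mono_left nhdsWithin_le_nhds
      refine le_of_tendsto htend ?_
      exact eventually_of_mem (Ioo_mem_nhdsLT_of_mem ⟨hcpos, le_rfl⟩)
        fun ξ hξ => (hlt ξ hξ).le
    have hc0 : deriv f c = 0 := le_antisymm hle0 hge0
    obtain ⟨ξ, hξmem, hξpos⟩ := key c hcU hc0 0 le_rfl hcpos
    exact absurd hξpos (not_lt.mpr (hlt ξ hξmem).le)
  -- conclude
  have := strictAntiOn_of_deriv_neg (convex_Ioo (0:ℝ) ξ₀)
    hfd.continuous.continuousOn
    (fun x hx => hneg x (by rwa [interior_Ioo] at hx))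
  exact this
end

section
/- The linearization of the system Ẋ = X((m-1)Y - 2X), Ẏ = -Y² - Y/2 - N X Y - X Z, Ż = Z((p-1)Y - 2X) at the critical point P₁ = (0,-1/2,0) has eigenvalues -(m-1)/2, 1/2, and -(p-1)/2; in particular, for m > 1 and 1 < p < m, P₁ is a hyperbolic saddle with a two-dimensional stable subspace and a one-dimensional unstable subspace. -/
open Real Set Module

set_option maxHeartbeats 1000000

/-- the linearization of the system at P₁ = (0,-1/2,0) is the matrix
[[-(m-1)/2, 0, 0], [N/2, 1/2, 0], [0, 0, -(p-1)/2]]; its eigenvalues are exactly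
-(m-1)/2, 1/2 and -(p-1)/2; for m > 1, 1 < p < m this is a hyperbolic saddle with
a two-dimensional stable subspace and a one-dimensional unstable subspace. -/
theorem linearization_at_P1
    (m p : ℝ) (N : ℕ)
    (hm : 1 < m) (hp : 1 < p) (hpm : p < m) (hN : 3 ≤ N)
    (F : (Fin 3 → ℝ) → (Fin 3 → ℝ))
    (hF : F = fun v => ![v 0 * ((m - 1) * v 1 - 2 * v 0),
      -(v 1) ^ 2 - v 1 / 2 - (N : ℝ) * v 0 * v 1 - v 0 * v 2,
      v 2 * ((p - 1) * v 1 - 2 * v 0)])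
    (J : Matrix (Fin 3) (Fin 3) ℝ)
    (hJ : J = ![![-(m - 1) / 2, 0, 0], ![(N : ℝ) / 2, 1 / 2, 0],
      ![0, 0, -(p - 1) / 2]]) :
    HasFDerivAt F (J.mulVecLin.toContinuousLinearMap) ![0, -1/2, 0] ∧
    (∀ μ : ℝ, Module.End.HasEigenvalue (J.mulVecLin : Module.End ℝ (Fin 3 → ℝ)) μ ↔
      (μ = -(m - 1) / 2 ∨ μ = 1 / 2 ∨ μ = -(p - 1) / 2)) ∧
    -(m - 1) / 2 < 0 ∧ (0:ℝ) < 1 / 2 ∧ -(p - 1) / 2 < 0 ∧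
    Module.finrank ℝ
      ↥(Module.End.eigenspace (J.mulVecLin : Module.End ℝ (Fin 3 → ℝ)) (-(m - 1) / 2)
        ⊔ Module.End.eigenspace (J.mulVecLin : Module.End ℝ (Fin 3 → ℝ)) (-(p - 1) / 2)) = 2 ∧
    Module.finrank ℝ
      ↥(Module.End.eigenspace (J.mulVecLin : Module.End ℝ (Fin 3 → ℝ)) (1 / 2)) = 1 := by
  subst hF hJ
  set J : Matrix (Fin 3) (Fin 3) ℝ := ![![-(m - 1) / 2, 0, 0], ![(N : ℝ) / 2, 1 / 2, 0],
      ![0, 0, -(p - 1) / 2]] with hJ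
  -- key characterization of the eigen-equation
  have key : ∀ (μ : ℝ) (v : Fin 3 → ℝ), J.mulVecLin v = μ • v ↔
      (-(m - 1) / 2 * v 0 = μ * v 0 ∧
        (N : ℝ) / 2 * v 0 + 1 / 2 * v 1 = μ * v 1 ∧
        -(p - 1) / 2 * v 2 = μ * v 2) := by
    intro μ v
    rw [Matrix.mulVecLin_apply]
    constructor
    · intro h
      refine ⟨?_, ?_, ?_⟩
      · have := congrFun h 0
        simpa [hJ, Matrix.mulVec, dotProduct, Fin.sum_univ_three] using this
      · have := congrFun h 1
        simpa [hJ, Matrix.mulVec, dotProduct, Fin.sum_univ_three] using this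
      · have := congrFun h 2
        simpa [hJ, Matrix.mulVec, dotProduct, Fin.sum_univ_three] using this
    · rintro ⟨h0, h1, h2⟩
      funext i
      fin_cases i <;>
        simp only [hJ, Matrix.mulVecLin_apply, Matrix.mulVec, dotProduct,
          Fin.sum_univ_three, Matrix.cons_val_zero, Matrix.cons_val_one, Matrix.head_cons,
          Matrix.cons_val_two, Matrix.tail_cons, Pi.smul_apply, smul_eq_mul, Fin.isValue,
          Matrix.cons_val_fin_one, Matrix.cons_val', Matrix.empty_val', Matrix.head_fin_const,
          Fin.zero_eta, Fin.mk_one, show (⟨2, by norm_num⟩ : Fin 3) = 2 from rfl] <;> linarith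
  have memE : ∀ (μ : ℝ) (v : Fin 3 → ℝ),
      v ∈ Module.End.eigenspace (J.mulVecLin : Module.End ℝ (Fin 3 → ℝ)) μ ↔
      (-(m - 1) / 2 * v 0 = μ * v 0 ∧
        (N : ℝ) / 2 * v 0 + 1 / 2 * v 1 = μ * v 1 ∧
        -(p - 1) / 2 * v 2 = μ * v 2) := by
    intro μ v
    rw [Module.End.mem_eigenspace_iff]
    exact key μ v
  have haneg : -(m - 1) / 2 < 0 := by linarith
  have hcneg : -(p - 1) / 2 < 0 := by linarith
  have hac : -(m - 1) / 2 ≠ -(p - 1) / 2 := by intro h; nlinarith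
  have hd : -(m - 1) / 2 - 1 / 2 ≠ 0 := by intro h; nlinarith
  -- eigenspaces as spans
  have hEa : Module.End.eigenspace (J.mulVecLin : Module.End ℝ (Fin 3 → ℝ)) (-(m - 1) / 2)
      = Submodule.span ℝ {![-(m - 1) / 2 - 1 / 2, (N : ℝ) / 2, 0]} := by
    ext v
    rw [memE, Submodule.mem_span_singleton]
    constructor
    · rintro ⟨h0, h1, h2⟩
      refine ⟨v 0 / (-(m - 1) / 2 - 1 / 2), ?_⟩
      have hv2 : v 2 = 0 := by
        rcases mul_eq_zero.mp (show (-(p - 1) / 2 - -(m - 1) / 2) * v 2 = 0 by linarith) with h | h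
        · exact absurd (by linarith : -(p - 1) / 2 = -(m - 1) / 2) (Ne.symm hac ∘ id)
        · exact h
      funext i
      fin_cases i
      · simp; field_simp; exact mul_div_cancel_right₀ _ (show (1 - m - 1 : ℝ) ≠ 0 by intro h; apply hd; linarith)
      · simp; field_simp; rw [div_eq_iff (show (1 - m - 1 : ℝ) ≠ 0 by intro h; apply hd; linarith)]; linarith
      · simp [hv2]
    · rintro ⟨t, rfl⟩
      refine ⟨?_, ?_, ?_⟩ <;> simp <;> ring
  have hEb : Module.End.eigenspace (J.mulVecLin : Module.End ℝ (Fin 3 → ℝ)) (1 / 2)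
      = Submodule.span ℝ {![0, 1, 0]} := by
    ext v
    rw [memE, Submodule.mem_span_singleton]
    constructor
    · rintro ⟨h0, h1, h2⟩
      have hv0 : v 0 = 0 := by
        rcases mul_eq_zero.mp (show (-(m - 1) / 2 - 1 / 2) * v 0 = 0 by linarith) with h | h
        · exact absurd h hd
        · exact h
      have hv2 : v 2 = 0 := by
        rcases mul_eq_zero.mp (show (-(p - 1) / 2 - 1 / 2) * v 2 = 0 by linarith) with h | h
        · exact absurd (by linarith : -(p - 1) / 2 = 1 / 2) (by intro hh; nlinarith)
        · exact h
      refine ⟨v 1, ?_⟩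
      funext i
      fin_cases i <;> simp [hv0, hv2]
    · rintro ⟨t, rfl⟩
      refine ⟨?_, ?_, ?_⟩ <;> simp <;> ring
  have hEc : Module.End.eigenspace (J.mulVecLin : Module.End ℝ (Fin 3 → ℝ)) (-(p - 1) / 2)
      = Submodule.span ℝ {![0, 0, 1]} := by
    ext v
    rw [memE, Submodule.mem_span_singleton]
    constructor
    · rintro ⟨h0, h1, h2⟩
      have hv0 : v 0 = 0 := by
        rcases mul_eq_zero.mp (show (-(m - 1) / 2 - -(p - 1) / 2) * v 0 = 0 by linarith) with h | h
        · exact absurd (by linarith : -(m - 1) / 2 = -(p - 1) / 2) hac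
        · exact h
      have hv1 : v 1 = 0 := by
        rw [hv0] at h1
        rcases mul_eq_zero.mp (show (1 / 2 - -(p - 1) / 2) * v 1 = 0 by linarith) with h | h
        · exact absurd h (by intro hh; nlinarith)
        · exact h
      refine ⟨v 2, ?_⟩
      funext i
      fin_cases i <;> simp [hv0, hv1]
    · rintro ⟨t, rfl⟩
      refine ⟨?_, ?_, ?_⟩ <;> simp <;> ring
  have hwa : (![-(m - 1) / 2 - 1 / 2, (N : ℝ) / 2, 0] : Fin 3 → ℝ) ≠ 0 := by
    intro h
    exact hd (by simpa using congrFun h 0)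
  have hwb : (![0, 1, 0] : Fin 3 → ℝ) ≠ 0 := by
    intro h
    simpa using congrFun h 1
  have hwc : (![0, 0, 1] : Fin 3 → ℝ) ≠ 0 := by
    intro h
    simpa using congrFun h 2
  have hra : Module.finrank ℝ
      ↥(Module.End.eigenspace (J.mulVecLin : Module.End ℝ (Fin 3 → ℝ)) (-(m - 1) / 2)) = 1 := by
    rw [hEa]; exact finrank_span_singleton hwa
  have hrb : Module.finrank ℝ
      ↥(Module.End.eigenspace (J.mulVecLin : Module.End ℝ (Fin 3 → ℝ)) (1 / 2)) = 1 := by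
    rw [hEb]; exact finrank_span_singleton hwb
  have hrc : Module.finrank ℝ
      ↥(Module.End.eigenspace (J.mulVecLin : Module.End ℝ (Fin 3 → ℝ)) (-(p - 1) / 2)) = 1 := by
    rw [hEc]; exact finrank_span_singleton hwc
  have hinf : Module.End.eigenspace (J.mulVecLin : Module.End ℝ (Fin 3 → ℝ)) (-(m - 1) / 2)
      ⊓ Module.End.eigenspace (J.mulVecLin : Module.End ℝ (Fin 3 → ℝ)) (-(p - 1) / 2) = ⊥ := by
    rw [eq_bot_iff]
    intro v hv
    obtain ⟨hva, hvc⟩ := Submodule.mem_inf.mp hv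
    rw [memE] at hva hvc
    obtain ⟨a0, a1, a2⟩ := hva
    obtain ⟨c0, c1, c2⟩ := hvc
    have hv0 : v 0 = 0 := by
      rcases mul_eq_zero.mp (show (-(m - 1) / 2 - -(p - 1) / 2) * v 0 = 0 by linarith) with h | h
      · exact absurd (by linarith : -(m - 1) / 2 = -(p - 1) / 2) hac
      · exact h
    have hv2 : v 2 = 0 := by
      rcases mul_eq_zero.mp (show (-(p - 1) / 2 - -(m - 1) / 2) * v 2 = 0 by linarith) with h | h
      · exact absurd (by linarith : -(p - 1) / 2 = -(m - 1) / 2) (Ne.symm hac)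
      · exact h
    have hv1 : v 1 = 0 := by
      rw [hv0] at a1
      rcases mul_eq_zero.mp (show (1 / 2 - -(m - 1) / 2) * v 1 = 0 by linarith) with h | h
      · exact absurd h (by intro hh; nlinarith)
      · exact h
    rw [Submodule.mem_bot]
    funext i
    fin_cases i <;> simp [hv0, hv1, hv2]
  have hsup : Module.finrank ℝ
      ↥(Module.End.eigenspace (J.mulVecLin : Module.End ℝ (Fin 3 → ℝ)) (-(m - 1) / 2)
        ⊔ Module.End.eigenspace (J.mulVecLin : Module.End ℝ (Fin 3 → ℝ)) (-(p - 1) / 2)) = 2 := by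
    have h := Submodule.finrank_sup_add_finrank_inf_eq
      (Module.End.eigenspace (J.mulVecLin : Module.End ℝ (Fin 3 → ℝ)) (-(m - 1) / 2))
      (Module.End.eigenspace (J.mulVecLin : Module.End ℝ (Fin 3 → ℝ)) (-(p - 1) / 2))
    rw [hinf, hra, hrc] at h
    simpa using h
  have heig : ∀ μ : ℝ, Module.End.HasEigenvalue (J.mulVecLin : Module.End ℝ (Fin 3 → ℝ)) μ ↔
      (μ = -(m - 1) / 2 ∨ μ = 1 / 2 ∨ μ = -(p - 1) / 2) := by
    intro μ
    constructor
    · intro h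
      by_contra hn
      push_neg at hn
      obtain ⟨n1, n2, n3⟩ := hn
      apply Module.End.hasEigenvalue_iff.mp h
      rw [eq_bot_iff]
      intro v hv
      rw [memE] at hv
      obtain ⟨e0, e1, e2⟩ := hv
      have hv0 : v 0 = 0 := by
        rcases mul_eq_zero.mp (show (-(m - 1) / 2 - μ) * v 0 = 0 by linarith) with h' | h'
        · exact absurd (by linarith : μ = -(m - 1) / 2) n1
        · exact h'
      have hv1 : v 1 = 0 := by
        rw [hv0] at e1
        rcases mul_eq_zero.mp (show (1 / 2 - μ) * v 1 = 0 by linarith) with h' | h'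
        · exact absurd (by linarith : μ = 1 / 2) n2
        · exact h'
      have hv2 : v 2 = 0 := by
        rcases mul_eq_zero.mp (show (-(p - 1) / 2 - μ) * v 2 = 0 by linarith) with h' | h'
        · exact absurd (by linarith : μ = -(p - 1) / 2) n3
        · exact h'
      rw [Submodule.mem_bot]
      funext i
      fin_cases i <;> simp [hv0, hv1, hv2]
    · rintro (rfl | rfl | rfl)
      · rw [Module.End.hasEigenvalue_iff, hEa, Ne, Submodule.span_singleton_eq_bot]
        exact hwa
      · rw [Module.End.hasEigenvalue_iff, hEb, Ne, Submodule.span_singleton_eq_bot]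
        exact hwb
      · rw [Module.End.hasEigenvalue_iff, hEc, Ne, Submodule.span_singleton_eq_bot]
        exact hwc
  have hder : HasFDerivAt
      (fun v : Fin 3 → ℝ => ![v 0 * ((m - 1) * v 1 - 2 * v 0),
        -(v 1) ^ 2 - v 1 / 2 - (N : ℝ) * v 0 * v 1 - v 0 * v 2,
        v 2 * ((p - 1) * v 1 - 2 * v 0)])
      (J.mulVecLin.toContinuousLinearMap) ![0, -1/2, 0] := by
    rw [hasFDerivAt_pi']
    intro i
    have h0 : HasFDerivAt (fun v : Fin 3 → ℝ => v 0)
        ((ContinuousLinearMap.proj 0 : (Fin 3 → ℝ) →L[ℝ] ℝ)) ![0, -1/2, 0] := by exact hasFDerivAt_apply 0 _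
    have h1 : HasFDerivAt (fun v : Fin 3 → ℝ => v 1)
        ((ContinuousLinearMap.proj 1 : (Fin 3 → ℝ) →L[ℝ] ℝ)) ![0, -1/2, 0] := by exact hasFDerivAt_apply 1 _
    have h2 : HasFDerivAt (fun v : Fin 3 → ℝ => v 2)
        ((ContinuousLinearMap.proj 2 : (Fin 3 → ℝ) →L[ℝ] ℝ)) ![0, -1/2, 0] := by exact hasFDerivAt_apply 2 _
    fin_cases i
    · have H := h0.mul ((h1.const_mul (m - 1)).sub (h0.const_mul 2))
      have H' := H.congr_of_eventuallyEq
        (Filter.Eventually.of_forall (fun v : Fin 3 → ℝ => by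
          show (![v 0 * ((m - 1) * v 1 - 2 * v 0),
            -(v 1) ^ 2 - v 1 / 2 - (N : ℝ) * v 0 * v 1 - v 0 * v 2,
            v 2 * ((p - 1) * v 1 - 2 * v 0)] : Fin 3 → ℝ) 0
            = v 0 * ((m - 1) * v 1 - 2 * v 0)
          simp))
      refine H'.congr_fderiv ?_
      refine ContinuousLinearMap.ext fun w => ?_
      simp only [ContinuousLinearMap.coe_comp', Function.comp_apply, ContinuousLinearMap.proj_apply,
        LinearMap.coe_toContinuousLinearMap', Matrix.mulVecLin_apply]
      simp [hJ, Matrix.mulVec, dotProduct, Fin.sum_univ_three]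
      first | (left; ring) | ring
    · have H := ((((h1.mul h1).neg).sub (h1.const_mul (1/2))).sub
        ((h0.const_mul (N : ℝ)).mul h1)).sub (h0.mul h2)
      have H' := H.congr_of_eventuallyEq
        (Filter.Eventually.of_forall (fun v : Fin 3 → ℝ => by
          show (![v 0 * ((m - 1) * v 1 - 2 * v 0),
            -(v 1) ^ 2 - v 1 / 2 - (N : ℝ) * v 0 * v 1 - v 0 * v 2,
            v 2 * ((p - 1) * v 1 - 2 * v 0)] : Fin 3 → ℝ) 1
            = -(v 1 * v 1) - 1/2 * v 1 - (N : ℝ) * v 0 * v 1 - v 0 * v 2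
          simp; ring))
      refine H'.congr_fderiv ?_
      refine ContinuousLinearMap.ext fun w => ?_
      simp only [ContinuousLinearMap.coe_comp', Function.comp_apply, ContinuousLinearMap.proj_apply,
        LinearMap.coe_toContinuousLinearMap', Matrix.mulVecLin_apply]
      simp [hJ, Matrix.mulVec, dotProduct, Fin.sum_univ_three]
      first | (left; ring) | ring
    · have H := h2.mul ((h1.const_mul (p - 1)).sub (h0.const_mul 2))
      have H' := H.congr_of_eventuallyEq
        (Filter.Eventually.of_forall (fun v : Fin 3 → ℝ => by
          show (![v 0 * ((m - 1) * v 1 - 2 * v 0),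
            -(v 1) ^ 2 - v 1 / 2 - (N : ℝ) * v 0 * v 1 - v 0 * v 2,
            v 2 * ((p - 1) * v 1 - 2 * v 0)] : Fin 3 → ℝ) 2
            = v 2 * ((p - 1) * v 1 - 2 * v 0)
          simp))
      refine H'.congr_fderiv ?_
      refine ContinuousLinearMap.ext fun w => ?_
      simp only [ContinuousLinearMap.coe_comp', Function.comp_apply, ContinuousLinearMap.proj_apply,
        LinearMap.coe_toContinuousLinearMap', Matrix.mulVecLin_apply]
      simp [hJ, Matrix.mulVec, dotProduct, Fin.sum_univ_three]
      first | (left; ring) | ring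
  exact ⟨hder, heig, haneg, by norm_num, hcneg, hsup, hrb⟩
end
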